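/- Let M = AW be a stable nonnegative matrix factorization with rank(A) = s, and let U be a set of s linearly independent rows of A. For each column index i, let S_i range over all sets of s linearly independent columns of A and let B_{S_i} be the r×s matrix that is zero outside rows S_i and equals (A^U_{S_i})⁻¹ on rows S_i. Then Wᵢ belongs to the set { B_{S} Mᵢ^U : S a set of s linearly independent columns of A }. -/

import Mathlib

open scoped Classical

/-- A subset `S` of column indices of `A` is admissible for a vector `v` if `v` lies in
the conical hull of the columns of `A` indexed by `S`. -/
def Admissible {m r : ℕ} (A : Matrix (Fin m) (Fin r) ℝ) (v : Fin m → ℝ)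
    (S : Finset (Fin r)) : Prop :=
  ∃ α : Fin r → ℝ, (∀ k, 0 ≤ α k) ∧ (∀ k, k ∉ S → α k = 0) ∧
    ∀ j, v j = ∑ k : Fin r, α k * A j k

/-- Encoding of a subset of `Fin r` giving larger weight to smaller indices, so that
among subsets of equal cardinality, lexicographically earlier subsets get larger codes. -/
def subsetCode {r : ℕ} (S : Finset (Fin r)) : ℕ := ∑ i ∈ S, 2 ^ (r - 1 - (i : ℕ))

/-- The order on subsets of `[r]`: smaller cardinality first, ties broken
lexicographically (as increasing sequences of indices). -/
def SubsetLt {r : ℕ} (S T : Finset (Fin r)) : Prop :=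
  S.card < T.card ∨ (S.card = T.card ∧ subsetCode T < subsetCode S)

/-- `S` is the (lexicographically) first admissible subset for `v`. -/
def IsFirstAdmissible {m r : ℕ} (A : Matrix (Fin m) (Fin r) ℝ) (v : Fin m → ℝ)
    (S : Finset (Fin r)) : Prop :=
  Admissible A v S ∧ ∀ T, Admissible A v T → T ≠ S → SubsetLt S T

/-- A nonnegative matrix factorization `M = A * W` is stable if every column of `W` is
supported in the first admissible subset of columns of `A` for the corresponding column
of `M`, and every row of `A` is supported in the first admissible subset of rows of `W`
for the corresponding row of `M`. -/
def Stable {m n r : ℕ} (M : Matrix (Fin m) (Fin n) ℝ)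
    (A : Matrix (Fin m) (Fin r) ℝ) (W : Matrix (Fin r) (Fin n) ℝ) : Prop :=
  (∀ i : Fin n, ∃ S : Finset (Fin r),
      IsFirstAdmissible A (fun j => M j i) S ∧ ∀ k, W k i ≠ 0 → k ∈ S) ∧
  (∀ j : Fin m, ∃ T : Finset (Fin r),
      IsFirstAdmissible W.transpose (fun i => M j i) T ∧ ∀ k, A j k ≠ 0 → k ∈ T)

lemma aux_carath {m r : ℕ} (A : Matrix (Fin m) (Fin r) ℝ) (v : Fin m → ℝ)
    (S : Finset (Fin r)) (h : IsFirstAdmissible A v S) :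
    LinearIndependent ℝ (fun k : S => fun j : Fin m => A j (k : Fin r)) := by
  by_contra hdep
  obtain ⟨α, hα0, hαsupp, hαsum⟩ := h.1
  have key : ∀ c : Fin r → ℝ, (∀ k, k ∉ S → c k = 0) →
      (∀ j, ∑ k : Fin r, c k * A j k = 0) → (∃ k₀, 0 < c k₀) → False := by
    rintro c hcsupp hcsum ⟨k₁, hk₁⟩
    have hk₁S : k₁ ∈ S := by
      by_contra h'
      rw [hcsupp _ h'] at hk₁; exact lt_irrefl 0 hk₁
    have hP : (S.filter (fun k => 0 < c k)).Nonempty :=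
      ⟨k₁, Finset.mem_filter.2 ⟨hk₁S, hk₁⟩⟩
    obtain ⟨k₀, hk₀P, hk₀min⟩ :=
      Finset.exists_min_image (S.filter fun k => 0 < c k) (fun k => α k / c k) hP
    obtain ⟨hk₀S, hk₀pos⟩ := Finset.mem_filter.1 hk₀P
    set τ := α k₀ / c k₀ with hτdef
    have hτ0 : 0 ≤ τ := div_nonneg (hα0 _) hk₀pos.le
    have hα' : ∀ k, 0 ≤ α k - τ * c k := by
      intro k
      rcases le_or_gt (c k) 0 with hck | hck
      · have h1 : τ * c k ≤ 0 := mul_nonpos_of_nonneg_of_nonpos hτ0 hck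
        have := hα0 k; linarith
      · have hkS : k ∈ S := by
          by_contra h'
          rw [hcsupp _ h'] at hck; exact lt_irrefl 0 hck
        have h1 := hk₀min k (Finset.mem_filter.2 ⟨hkS, hck⟩)
        have h2 : τ * c k ≤ α k := (le_div_iff₀ hck).1 h1
        linarith
    have hadm : Admissible A v (S.erase k₀) := by
      refine ⟨fun k => α k - τ * c k, hα', ?_, ?_⟩
      · intro k hk
        show α k - τ * c k = 0
        by_cases hkS : k ∈ S
        · have hkk : k = k₀ := by
            by_contra hne; exact hk (Finset.mem_erase.2 ⟨hne, hkS⟩)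
          subst hkk
          rw [hτdef, div_mul_cancel₀ _ (ne_of_gt hk₀pos), sub_self]
        · rw [hcsupp _ hkS, hαsupp _ hkS, mul_zero, sub_zero]
      · intro j
        have hsplit : ∑ k : Fin r, (α k - τ * c k) * A j k
            = (∑ k : Fin r, α k * A j k) - τ * ∑ k : Fin r, c k * A j k := by
          rw [Finset.mul_sum, ← Finset.sum_sub_distrib]
          exact Finset.sum_congr rfl fun k _ => by ring
        rw [hsplit, hcsum, mul_zero, sub_zero, ← hαsum]
    have hne : S.erase k₀ ≠ S := fun he => by
      have h1 := Finset.notMem_erase k₀ S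
      rw [he] at h1; exact h1 hk₀S
    have hlt := h.2 _ hadm hne
    have hcard : (S.erase k₀).card < S.card := Finset.card_erase_lt_of_mem hk₀S
    rcases hlt with h1 | ⟨h1, _⟩ <;> omega
  rw [Fintype.not_linearIndependent_iff] at hdep
  obtain ⟨g, hgsum, k₁, hk₁⟩ := hdep
  set c : Fin r → ℝ := fun k => if h : k ∈ S then g ⟨k, h⟩ else 0 with hcdef
  have hcsupp : ∀ k, k ∉ S → c k = 0 := fun k hk => dif_neg hk
  have hcS : ∀ k : S, c ↑k = g k := fun k => dif_pos k.2
  have hcsum : ∀ j, ∑ k : Fin r, c k * A j k = 0 := by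
    intro j
    have h0 := congrFun hgsum j
    simp only [Finset.sum_apply, Pi.smul_apply, smul_eq_mul, Pi.zero_apply] at h0
    calc ∑ k : Fin r, c k * A j k = ∑ k ∈ S, c k * A j k :=
          (Finset.sum_subset (Finset.subset_univ S)
            (fun k _ hk => by rw [hcsupp k hk, zero_mul])).symm
      _ = ∑ k : S, c ↑k * A j ↑k := (Finset.sum_coe_sort S _).symm
      _ = ∑ k : S, g k * A j ↑k := Finset.sum_congr rfl fun k _ => by rw [hcS]
      _ = 0 := h0
  rcases lt_or_gt_of_ne hk₁ with hneg | hpos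
  · refine key (fun k => -c k) (fun k hk => by show -c k = 0; rw [hcsupp _ hk, neg_zero])
      (fun j => ?_) ⟨k₁, by show 0 < -c ↑k₁; have := hcS k₁; linarith⟩
    have := hcsum j
    calc ∑ k : Fin r, -c k * A j k = -∑ k : Fin r, c k * A j k := by
          rw [← Finset.sum_neg_distrib]; exact Finset.sum_congr rfl fun k _ => by ring
      _ = 0 := by rw [this, neg_zero]
  · exact key c hcsupp hcsum ⟨k₁, by have := hcS k₁; linarith⟩

/-- for a stable factorization M = A * W with rank(A) = s and U a set of s
linearly independent rows of A, each column Wᵢ is of the form B_S Mᵢ^U for some set S of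
s linearly independent columns of A (B_S being zero outside rows S and (A^U_S)⁻¹ on S). -/
theorem stmt_9 {m n r s : ℕ} (M : Matrix (Fin m) (Fin n) ℝ)
    (A : Matrix (Fin m) (Fin r) ℝ) (W : Matrix (Fin r) (Fin n) ℝ)
    (hA : ∀ i k, 0 ≤ A i k) (hW : ∀ k j, 0 ≤ W k j) (hfac : M = A * W)
    (hstable : Stable M A W) (hrank : A.rank = s)
    (U : Fin s → Fin m) (hU : Function.Injective U)
    (hUindep : LinearIndependent ℝ (fun u : Fin s => fun k : Fin r => A (U u) k))
    (i : Fin n) :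
    ∃ σ : Fin s → Fin r, Function.Injective σ ∧
      LinearIndependent ℝ (fun t : Fin s => fun j : Fin m => A j (σ t)) ∧
      (∀ k : Fin r, (∀ t : Fin s, σ t ≠ k) → W k i = 0) ∧
      ∀ t : Fin s,
        W (σ t) i = ((A.submatrix U σ)⁻¹).mulVec (fun u : Fin s => M (U u) i) t := by
  classical
  obtain ⟨S, hSfirst, hSsupp⟩ := hstable.1 i
  set cols : Fin r → (Fin m → ℝ) := fun k => fun j => A j k with hcolsdef
  have hSindep : LinearIndependent ℝ (fun k : S => cols ↑k) := aux_carath A _ S hSfirst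
  have hSinj : Function.Injective (fun k : S => cols ↑k) := hSindep.injective
  have hcolsT : cols = A.transpose := by
    funext k j; rfl
  -- extend the independent set of columns indexed by S to a maximal independent set
  have hs₀indep : LinearIndependent ℝ
      ((↑) : Set.range (fun k : S => cols ↑k) → (Fin m → ℝ)) :=
    hSindep.linearIndepOn_id
  have hsub : Set.range (fun k : S => cols ↑k) ⊆ Set.range cols := by
    rintro x ⟨k, rfl⟩; exact ⟨↑k, rfl⟩
  obtain ⟨b, hb_sub, hs₀b, hspan, hbindep⟩ :=
    exists_linearIndepOn_id_extension hs₀indep hsub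
  haveI : Fintype b := ((Set.finite_range cols).subset hb_sub).fintype
  have hspan_eq : Submodule.span ℝ b = Submodule.span ℝ (Set.range cols) :=
    le_antisymm (Submodule.span_mono hb_sub) (Submodule.span_le.2 hspan)
  have hcardb : Fintype.card b = s := by
    have h1 := finrank_span_set_eq_card hbindep
    rw [hspan_eq, hcolsT, ← show A.col = A.transpose from rfl, ← Matrix.rank_eq_finrank_span_cols, hrank] at h1
    rw [← Set.toFinset_card, ← h1]
  -- choose index representatives
  have hψex : ∀ x : b, ∃ k : Fin r, cols k = ↑x ∧
      ((x : Fin m → ℝ) ∈ Set.range (fun k : S => cols ↑k) → k ∈ S) := by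
    intro x
    by_cases hx : (x : Fin m → ℝ) ∈ Set.range (fun k : S => cols ↑k)
    · obtain ⟨k, hk⟩ := hx
      exact ⟨↑k, hk, fun _ => k.2⟩
    · obtain ⟨k, hk⟩ := hb_sub x.2
      exact ⟨k, hk, fun h => absurd h hx⟩
  choose ψ hψ1 hψ2 using hψex
  have hψinj : Function.Injective ψ := by
    intro x y hxy
    have : (x : Fin m → ℝ) = y := by rw [← hψ1 x, ← hψ1 y, hxy]
    exact Subtype.ext this
  set e : Fin s ≃ b := (Fintype.equivFinOfCardEq hcardb).symm with hedef
  refine ⟨fun t => ψ (e t), ?_, ?_, ?_, ?_⟩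
  · exact hψinj.comp e.injective
  · have h1 : LinearIndependent ℝ (fun t : Fin s => ((e t : b) : Fin m → ℝ)) :=
      hbindep.comp e e.injective
    have h2 : (fun t : Fin s => fun j : Fin m => A j (ψ (e t)))
        = fun t : Fin s => ((e t : b) : Fin m → ℝ) := by
      funext t; exact hψ1 (e t)
    rw [h2]; exact h1
  · intro k hk
    by_contra hWk
    have hkS : k ∈ S := hSsupp k hWk
    have hxs₀ : cols k ∈ Set.range (fun k : S => cols ↑k) := ⟨⟨k, hkS⟩, rfl⟩
    have hxb : cols k ∈ b := hs₀b hxs₀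
    set xb : b := ⟨cols k, hxb⟩ with hxbdef
    have hψS : ψ xb ∈ S := hψ2 xb hxs₀
    have hcolseq : cols (ψ xb) = cols k := hψ1 xb
    have : (⟨ψ xb, hψS⟩ : S) = ⟨k, hkS⟩ := hSinj hcolseq
    have hψk : ψ xb = k := congrArg Subtype.val this
    refine hk (e.symm xb) ?_
    show ψ (e (e.symm xb)) = k
    rw [e.apply_symm_apply]; exact hψk
  · -- the linear-algebra computation
    set σ : Fin s → Fin r := fun t => ψ (e t) with hσdef
    have hσsupp : ∀ k : Fin r, (∀ t : Fin s, σ t ≠ k) → W k i = 0 := by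
      intro k hk
      by_contra hWk
      have hkS : k ∈ S := hSsupp k hWk
      have hxs₀ : cols k ∈ Set.range (fun k : S => cols ↑k) := ⟨⟨k, hkS⟩, rfl⟩
      have hxb : cols k ∈ b := hs₀b hxs₀
      set xb : b := ⟨cols k, hxb⟩ with hxbdef
      have hψS : ψ xb ∈ S := hψ2 xb hxs₀
      have : (⟨ψ xb, hψS⟩ : S) = ⟨k, hkS⟩ := hSinj (hψ1 xb)
      refine hk (e.symm xb) ?_
      show ψ (e (e.symm xb)) = k
      rw [e.apply_symm_apply]; exact congrArg Subtype.val this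
    have hσinj : Function.Injective σ := hψinj.comp e.injective
    have hσindep : LinearIndependent ℝ (fun t : Fin s => cols (σ t)) := by
      have h1 : LinearIndependent ℝ (fun t : Fin s => ((e t : b) : Fin m → ℝ)) :=
        hbindep.comp e e.injective
      have h2 : (fun t : Fin s => cols (σ t))
          = fun t : Fin s => ((e t : b) : Fin m → ℝ) := by
        funext t; exact hψ1 (e t)
      rw [h2]; exact h1
    -- every row of A is in the span of the rows indexed by U
    have hrowU : ∀ j : Fin m, (fun k => A j k) ∈
        Submodule.span ℝ (Set.range (fun u : Fin s => fun k : Fin r => A (U u) k)) := by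
      have hle : Submodule.span ℝ (Set.range (fun u : Fin s => fun k : Fin r => A (U u) k))
          ≤ Submodule.span ℝ (Set.range A) :=
        Submodule.span_mono (by rintro x ⟨u, rfl⟩; exact ⟨U u, rfl⟩)
      have heq : Submodule.span ℝ (Set.range (fun u : Fin s => fun k : Fin r => A (U u) k))
          = Submodule.span ℝ (Set.range A) := by
        apply Submodule.eq_of_le_of_finrank_le hle
        have h1 : Module.finrank ℝ (Submodule.span ℝ (Set.range A)) = s := by
          rw [← show A.row = A from rfl, ← Matrix.rank_eq_finrank_span_row, hrank]
        have h2 : Module.finrank ℝ (Submodule.span ℝ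
            (Set.range (fun u : Fin s => fun k : Fin r => A (U u) k))) = s := by
          have h3 := linearIndependent_iff_card_eq_finrank_span.mp hUindep
          rw [Set.finrank] at h3
          rw [← h3, Fintype.card_fin]
        rw [h1, h2]
      intro j
      rw [heq]
      exact Submodule.subset_span ⟨j, rfl⟩
    have hBunit : IsUnit (A.submatrix U σ) := by
      rw [← Matrix.linearIndependent_cols_iff_isUnit]
      rw [Fintype.linearIndependent_iff]
      intro g hg
      have hg' : ∀ u : Fin s, ∑ t : Fin s, g t * A (U u) (σ t) = 0 := by
        intro u
        have h0 := congrFun hg u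
        simpa [Matrix.transpose_apply, Matrix.submatrix_apply, Finset.sum_apply,
          smul_eq_mul] using h0
      have hzero : ∑ t : Fin s, g t • cols (σ t) = 0 := by
        funext j
        have hj := hrowU j
        rw [Submodule.mem_span_range_iff_exists_fun] at hj
        obtain ⟨β, hβ⟩ := hj
        have hβ' : ∀ k : Fin r, ∑ u : Fin s, β u * A (U u) k = A j k := by
          intro k
          have := congrFun hβ k
          simpa [Finset.sum_apply, smul_eq_mul] using this
        simp only [Finset.sum_apply, Pi.smul_apply, smul_eq_mul, Pi.zero_apply]
        calc ∑ t : Fin s, g t * cols (σ t) j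
            = ∑ t : Fin s, ∑ u : Fin s, g t * (β u * A (U u) (σ t)) := by
              refine Finset.sum_congr rfl fun t _ => ?_
              rw [← Finset.mul_sum]
              congr 1
              exact (hβ' (σ t)).symm
          _ = ∑ u : Fin s, ∑ t : Fin s, g t * (β u * A (U u) (σ t)) := Finset.sum_comm
          _ = ∑ u : Fin s, β u * ∑ t : Fin s, g t * A (U u) (σ t) := by
              refine Finset.sum_congr rfl fun u _ => ?_
              rw [Finset.mul_sum]
              exact Finset.sum_congr rfl fun t _ => by ring
          _ = 0 := by simp [hg']
      exact fun t => Fintype.linearIndependent_iff.mp hσindep g hzero t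
    have hMU : ∀ u : Fin s, M (U u) i = ∑ t : Fin s, A (U u) (σ t) * W (σ t) i := by
      intro u
      have h1 : M (U u) i = ∑ k : Fin r, A (U u) k * W k i := by
        rw [hfac, Matrix.mul_apply]
      rw [h1]
      have h2 : ∑ k : Fin r, A (U u) k * W k i
          = ∑ k ∈ Finset.univ.image σ, A (U u) k * W k i := by
        refine (Finset.sum_subset (Finset.subset_univ _) fun k _ hk => ?_).symm
        have : ∀ t : Fin s, σ t ≠ k := by
          intro t ht
          exact hk (Finset.mem_image.2 ⟨t, Finset.mem_univ t, ht⟩)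
        rw [hσsupp k this, mul_zero]
      rw [h2, Finset.sum_image (fun x _ y _ hxy => hσinj hxy)]
    have hBmul : (A.submatrix U σ).mulVec (fun t => W (σ t) i)
        = fun u => M (U u) i := by
      funext u
      simp only [Matrix.mulVec, dotProduct, Matrix.submatrix_apply]
      exact (hMU u).symm
    have hfinal : ((A.submatrix U σ)⁻¹).mulVec (fun u => M (U u) i)
        = fun t => W (σ t) i := by
      rw [← hBmul, Matrix.mulVec_mulVec,
        Matrix.nonsing_inv_mul _ ((Matrix.isUnit_iff_isUnit_det _).1 hBunit),
        Matrix.one_mulVec]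
    exact fun t => (congrFun hfinal t).symm
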